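/- Let T be a tree equipped with compatible local orientations, i.e. a function f from nodes of T to nodes of T such that (i) for every node u, f(u) = u or f(u) is a neighbour of u, (ii) if f(u) = u then f(v) = u for every neighbour v of u, and (iii) if f(u) = v with v ≠ u, then f(w) = u for every neighbour w of u with w ≠ v. Then exactly one of the following holds: either there is a unique node u with f(u) = u, or there is a unique edge uv of T with f(u) = v and f(v) = u. -/

import Mathlib

open SimpleGraph

section Aux

variable {V : Type} {T : SimpleGraph V}

/-- In a tree, every path realizes the distance between its endpoints. -/
private lemma tree_path_length (hT : T.IsTree) {x y : V}
    (p : T.Walk x y) (hp : p.IsPath) : p.length = T.dist x y := by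
  obtain ⟨q, hq, hql⟩ := hT.isConnected.exists_path_of_dist x y
  rw [(hT.existsUnique_path x y).unique hp hq, hql]

/-- In a tree, adjacent vertices have different distances to any vertex. -/
private lemma tree_dist_ne_of_adj (hT : T.IsTree) {x a b : V}
    (hab : T.Adj a b) : T.dist x a ≠ T.dist x b := by
  classical
  intro h
  obtain ⟨p, hp, hpl⟩ := hT.isConnected.exists_path_of_dist a x
  have hcomm1 : T.dist x a = T.dist a x := dist_comm
  have hcomm2 : T.dist x b = T.dist b x := dist_comm
  by_cases hb : b ∈ p.support
  · have h1 : (p.takeUntil b hb).length = T.dist a b :=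
      tree_path_length hT _ (hp.takeUntil hb)
    have h2 : (p.dropUntil b hb).length = T.dist b x :=
      tree_path_length hT _ (hp.dropUntil hb)
    have h3 : (p.takeUntil b hb).length + (p.dropUntil b hb).length = p.length := by
      rw [← Walk.length_append, p.take_spec hb]
    have hd1 : T.dist a b = 1 := dist_eq_one_iff_adj.mpr hab
    omega
  · have hq : (Walk.cons hab.symm p).IsPath := hp.cons hb
    have hql := tree_path_length hT _ hq
    rw [Walk.length_cons, hpl] at hql
    omega

/-- In a tree, the "parent" (neighbour closer to `x`) is unique. -/
private lemma tree_parent_unique (hT : T.IsTree) {x v u₁ u₂ : V}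
    (h1 : T.Adj v u₁) (h2 : T.Adj v u₂)
    (hd1 : T.dist x u₁ + 1 = T.dist x v) (hd2 : T.dist x u₂ + 1 = T.dist x v) :
    u₁ = u₂ := by
  classical
  obtain ⟨p₁, hp₁, hl₁⟩ := hT.isConnected.exists_path_of_dist u₁ x
  obtain ⟨p₂, hp₂, hl₂⟩ := hT.isConnected.exists_path_of_dist u₂ x
  have hv₁ : v ∉ p₁.support := by
    intro hv
    have ht := tree_path_length hT _ (hp₁.takeUntil hv)
    have hd := tree_path_length hT _ (hp₁.dropUntil hv)
    have h3 : (p₁.takeUntil v hv).length + (p₁.dropUntil v hv).length = p₁.length := by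
      rw [← Walk.length_append, p₁.take_spec hv]
    have e1 : T.dist u₁ v = 1 := dist_eq_one_iff_adj.mpr h1.symm
    have e2 : T.dist x u₁ = T.dist u₁ x := dist_comm
    have e3 : T.dist x v = T.dist v x := dist_comm
    omega
  have hv₂ : v ∉ p₂.support := by
    intro hv
    have ht := tree_path_length hT _ (hp₂.takeUntil hv)
    have hd := tree_path_length hT _ (hp₂.dropUntil hv)
    have h3 : (p₂.takeUntil v hv).length + (p₂.dropUntil v hv).length = p₂.length := by
      rw [← Walk.length_append, p₂.take_spec hv]
    have e1 : T.dist u₂ v = 1 := dist_eq_one_iff_adj.mpr h2.symm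
    have e2 : T.dist x u₂ = T.dist u₂ x := dist_comm
    have e3 : T.dist x v = T.dist v x := dist_comm
    omega
  have heq : Walk.cons h1 p₁ = Walk.cons h2 p₂ :=
    (hT.existsUnique_path v x).unique (hp₁.cons hv₁) (hp₂.cons hv₂)
  have := congrArg (fun w => Walk.getVert w 1) heq
  simpa [Walk.getVert_cons_succ] using this

/-- The distance step lemma: in a tree, if `u—v` with `u` a parent of `v`
(relative to `x`) and `w ≠ u` is another neighbour of `v`, then `w` is
farther from `x` than `v`. -/
private lemma tree_step (hT : T.IsTree) {x u v w : V} {n : ℕ}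
    (huv : T.Adj u v) (hvw : T.Adj v w) (hwu : w ≠ u)
    (hdu : T.dist x u = n) (hdv : T.dist x v = n + 1) : T.dist x w = n + 2 := by
  have hle : T.dist x w ≤ T.dist x v + T.dist v w := hT.isConnected.dist_triangle
  have hge : T.dist x v ≤ T.dist x w + T.dist w v := hT.isConnected.dist_triangle
  have e1 : T.dist v w = 1 := dist_eq_one_iff_adj.mpr hvw
  have e2 : T.dist w v = 1 := dist_eq_one_iff_adj.mpr hvw.symm
  have hne1 : T.dist x v ≠ T.dist x w := tree_dist_ne_of_adj hT (x := x) hvw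
  have hnen : T.dist x w ≠ n := by
    intro hn
    exact hwu (tree_parent_unique hT (x := x) hvw huv.symm (by omega) (by omega))
  omega

/-- Distances in a finite graph are less than the number of vertices. -/
private lemma tree_dist_lt_card [Fintype V] (hT : T.IsTree) (x y : V) :
    T.dist x y + 1 ≤ Fintype.card V := by
  obtain ⟨p, hp, hl⟩ := hT.isConnected.exists_path_of_dist x y
  have h := hp.support_nodup.length_le_card
  rw [Walk.length_support] at h
  omega

/-- Existence: some vertex satisfies `f (f u) = u`. -/
private lemma exists_ff_eq [Fintype V] (hT : T.IsTree) (f : V → V)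
    (h0 : ∀ u, f u = u ∨ T.Adj u (f u)) : ∃ u, f (f u) = u := by
  by_contra hc
  push_neg at hc
  have hfix : ∀ u, f u ≠ u := fun u hu => hc u (by rw [hu, hu])
  have hadj : ∀ u, T.Adj u (f u) := fun u => (h0 u).resolve_left (hfix u)
  obtain ⟨x⟩ := hT.isConnected.nonempty
  have key : ∀ n, T.dist x (f^[n] x) = n := by
    intro n
    induction n using Nat.twoStepInduction with
    | zero => simp
    | one => simpa [dist_eq_one_iff_adj] using hadj x
    | more n ihn ihn1 =>
      have h1 : f^[n + 1] x = f (f^[n] x) := Function.iterate_succ_apply' f n x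
      have h2 : f^[n + 2] x = f (f^[n + 1] x) := Function.iterate_succ_apply' f (n + 1) x
      refine tree_step hT (u := f^[n] x) (v := f^[n+1] x) ?_ ?_ ?_ ihn ihn1
      · rw [h1]; exact hadj _
      · rw [h2]; exact hadj _
      · rw [h2, h1]; exact hc _
  have := key (Fintype.card V)
  have := tree_dist_lt_card hT x (f^[Fintype.card V] x)
  omega

/-- Propagation from a node root: every other vertex points strictly closer
to the root. -/
private lemma node_prop (hT : T.IsTree) {f : V → V}
    (h1 : ∀ u, f u = u → ∀ w, T.Adj u w → f w = u)
    (h2 : ∀ u w₀, f u = w₀ → w₀ ≠ u → ∀ w, T.Adj u w → w ≠ w₀ → f w = u)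
    {r : V} (hr : f r = r) :
    ∀ n x, T.dist r x = n → x = r ∨ T.dist r (f x) + 1 = n := by
  intro n
  induction n with
  | zero =>
    intro x hx
    exact Or.inl (hT.isConnected.dist_eq_zero_iff.mp hx).symm
  | succ n ih =>
    intro x hx
    right
    have hxr : x ≠ r := by
      intro h; subst h; rw [SimpleGraph.dist_self] at hx; omega
    obtain ⟨p, hp, hl⟩ := hT.isConnected.exists_path_of_dist x r
    cases p with
    | nil => exact absurd rfl hxr
    | @cons _ y _ h q =>
      have hcomm : T.dist x r = T.dist r x := dist_comm
      rw [Walk.length_cons, hcomm, hx] at hl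
      -- hl : q.length + 1 = n + 1
      have hqy : T.dist r y = n := by
        have hle : T.dist y r ≤ q.length := dist_le q
        have hcy : T.dist y r = T.dist r y := dist_comm
        have ht : T.dist r x ≤ T.dist r y + T.dist y x := hT.isConnected.dist_triangle
        have e1 : T.dist y x = 1 := dist_eq_one_iff_adj.mpr h.symm
        omega
      cases n with
      | zero =>
        have hy : y = r := (hT.isConnected.dist_eq_zero_iff.mp hqy).symm
        have hfx : f x = r := h1 r hr x (hy ▸ h.symm)
        rw [hfx, SimpleGraph.dist_self]
      | succ m =>
        rcases ih y hqy with hy | hy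
        · subst hy; rw [SimpleGraph.dist_self] at hqy; omega
        · have hfyy : f y ≠ y := by
            intro h'; rw [h'] at hy; omega
          have hxfy : x ≠ f y := by
            intro h'; rw [← h'] at hy; omega
          have : f x = y := h2 y (f y) rfl hfyy x h.symm hxfy
          rw [this, hqy]

/-- Propagation from an edge root `a—b`: every vertex on the `a` side (other
than `a`) points strictly closer to `a`. -/
private lemma edge_prop (hT : T.IsTree) {f : V → V}
    (h2 : ∀ u w₀, f u = w₀ → w₀ ≠ u → ∀ w, T.Adj u w → w ≠ w₀ → f w = u)
    {a b : V} (hab : T.Adj a b) (hfa : f a = b) (hfb : f b = a) :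
    ∀ n x, T.dist a x = n → T.dist b x = n + 1 →
      x = a ∨ (T.dist a (f x) + 1 = n ∧ T.dist b (f x) = n) := by
  intro n
  induction n with
  | zero =>
    intro x hx _
    exact Or.inl (hT.isConnected.dist_eq_zero_iff.mp hx).symm
  | succ n ih =>
    intro x hax hbx
    right
    have hxa : x ≠ a := by
      intro h; subst h; rw [SimpleGraph.dist_self] at hax; omega
    have hxb : x ≠ b := by
      intro h; subst h; rw [SimpleGraph.dist_self] at hbx; omega
    obtain ⟨p, hp, hl⟩ := hT.isConnected.exists_path_of_dist x a
    cases p with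
    | nil => exact absurd rfl hxa
    | @cons _ y _ h q =>
      have hcomm : T.dist x a = T.dist a x := dist_comm
      rw [Walk.length_cons, hcomm, hax] at hl
      have e1 : T.dist y x = 1 := dist_eq_one_iff_adj.mpr h.symm
      have hay : T.dist a y = n := by
        have hle : T.dist y a ≤ q.length := dist_le q
        have hcy : T.dist y a = T.dist a y := dist_comm
        have ht : T.dist a x ≤ T.dist a y + T.dist y x := hT.isConnected.dist_triangle
        omega
      have hby : T.dist b y = n + 1 := by
        have t1 : T.dist b y ≤ T.dist b a + T.dist a y := hT.isConnected.dist_triangle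
        have t2 : T.dist b x ≤ T.dist b y + T.dist y x := hT.isConnected.dist_triangle
        have e2 : T.dist b a = 1 := dist_eq_one_iff_adj.mpr hab.symm
        omega
      cases n with
      | zero =>
        have hy : y = a := (hT.isConnected.dist_eq_zero_iff.mp hay).symm
        have hba : b ≠ a := hab.ne'
        have hfx : f x = a := h2 a b hfa hba x (hy ▸ h.symm) hxb
        rw [hfx, SimpleGraph.dist_self]
        exact ⟨rfl, dist_eq_one_iff_adj.mpr hab.symm⟩
      | succ m =>
        rcases ih y hay hby with hy | ⟨hy1, hy2⟩
        · subst hy; rw [SimpleGraph.dist_self] at hay; omega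
        · have hfyy : f y ≠ y := by
            intro h'; rw [h'] at hy1; omega
          have hxfy : x ≠ f y := by
            intro h'; rw [← h'] at hy1; omega
          have : f x = y := h2 y (f y) rfl hfyy x h.symm hxfy
          rw [this, hay, hby]
          exact ⟨rfl, rfl⟩

/-- Each vertex is strictly on one side of an edge. -/
private lemma tree_side (hT : T.IsTree) {a b : V} (hab : T.Adj a b) (x : V) :
    T.dist a x + 1 = T.dist b x ∨ T.dist b x + 1 = T.dist a x := by
  have hne : T.dist x a ≠ T.dist x b := tree_dist_ne_of_adj hT hab
  have t1 : T.dist b x ≤ T.dist b a + T.dist a x := hT.isConnected.dist_triangle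
  have t2 : T.dist a x ≤ T.dist a b + T.dist b x := hT.isConnected.dist_triangle
  have e1 : T.dist a b = 1 := dist_eq_one_iff_adj.mpr hab
  have e2 : T.dist b a = 1 := dist_eq_one_iff_adj.mpr hab.symm
  have c1 : T.dist x a = T.dist a x := dist_comm
  have c2 : T.dist x b = T.dist b x := dist_comm
  omega

/-- There is no second edge root, disjoint from `{a, b}`, on the `a` side. -/
private lemma edge_no_other (hT : T.IsTree) {f : V → V}
    (h2 : ∀ u w₀, f u = w₀ → w₀ ≠ u → ∀ w, T.Adj u w → w ≠ w₀ → f w = u)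
    {a b c d : V} (hab : T.Adj a b)
    (hfa : f a = b) (hfb : f b = a) (hfc : f c = d) (hfd : f d = c)
    (hca : c ≠ a) (hda : d ≠ a)
    (hside : T.dist b c = T.dist a c + 1) : False := by
  rcases edge_prop hT h2 hab hfa hfb (T.dist a c) c rfl hside with h | ⟨e1, e2⟩
  · exact hca h
  rw [hfc] at e1 e2
  rcases edge_prop hT h2 hab hfa hfb (T.dist a d) d rfl (by omega) with h | ⟨e3, e4⟩
  · exact hda h
  rw [hfd] at e3
  omega

end Aux

/-- a tree with compatible local orientations has either a unique
node-root (a node `u` with `f u = u`) or a unique edge-root (an edge `uv` with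
`f u = v` and `f v = u`), but not both. -/
theorem stmt7 (V : Type) [Fintype V] (T : SimpleGraph V) (hT : T.IsTree)
    (f : V → V)
    (h0 : ∀ u, f u = u ∨ T.Adj u (f u))
    (h1 : ∀ u, f u = u → ∀ w, T.Adj u w → f w = u)
    (h2 : ∀ u w₀, f u = w₀ → w₀ ≠ u → ∀ w, T.Adj u w → w ≠ w₀ → f w = u) :
    Xor' (∃! r : V, f r = r)
      (∃! e : Sym2 V, ∃ a b : V, e = s(a, b) ∧ T.Adj a b ∧ f a = b ∧ f b = a) := by
  obtain ⟨u₀, hu₀⟩ := exists_ff_eq hT f h0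
  by_cases hroot : ∃ r, f r = r
  · obtain ⟨r, hr⟩ := hroot
    left
    constructor
    · refine ⟨r, hr, ?_⟩
      intro y hy
      rcases node_prop hT h1 h2 hr (T.dist r y) y rfl with h | h
      · exact h
      · rw [hy] at h; omega
    · rintro ⟨e, ⟨a, b, he, hadj, hfa, hfb⟩, -⟩
      have hane : a ≠ r := by
        intro h; subst h; rw [hr] at hfa; subst hfa; exact hadj.ne rfl
      have hbne : b ≠ r := by
        intro h; subst h; rw [hr] at hfb; subst hfb; exact hadj.ne rfl
      rcases node_prop hT h1 h2 hr (T.dist r a) a rfl with h | ha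
      · exact hane h
      rcases node_prop hT h1 h2 hr (T.dist r b) b rfl with h | hb
      · exact hbne h
      rw [hfa] at ha
      rw [hfb] at hb
      omega
  · right
    have hfu : f u₀ ≠ u₀ := fun h => hroot ⟨u₀, h⟩
    have hadj : T.Adj u₀ (f u₀) := (h0 u₀).resolve_left hfu
    set a := u₀ with ha_def
    set b := f u₀ with hb_def
    have hfa : f a = b := rfl
    have hfb : f b = a := hu₀
    constructor
    · refine ⟨s(a, b), ⟨a, b, rfl, hadj, hfa, hfb⟩, ?_⟩
      rintro e ⟨c, d, rfl, hcd, hfc, hfd⟩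
      -- handle the overlap cases
      by_cases hca : c = a
      · subst hca; rw [hfa] at hfc; rw [hfc]
      by_cases hcb : c = b
      · subst hcb; rw [hfb] at hfc; rw [hfc, Sym2.eq_swap]
      by_cases hda : d = a
      · subst hda; rw [hfa] at hfd; rw [hfd, Sym2.eq_swap]
      by_cases hdb : d = b
      · subst hdb; rw [hfb] at hfd; rw [hfd]
      exfalso
      rcases tree_side hT hadj c with hs | hs
      · exact edge_no_other hT h2 hadj hfa hfb hfc hfd hca hda hs.symm
      · exact edge_no_other hT h2 hadj.symm hfb hfa hfc hfd hcb hdb hs.symm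
    · rintro ⟨r, hr, -⟩
      exact hroot ⟨r, hr⟩
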